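/- For every m ∈ ℤ, the function y ↦ (∏_{j=1}^n sinh(y/(2 p_j))) / sinh(y/2)^{n−2}, restricted to a punctured neighborhood of 2πim, extends to a holomorphic function on a full neighborhood of 2πim if and only if p_j divides m for at least n − 2 of the indices j ∈ {1, …, n}. Equivalently, F has a pole at y = 2πim if and only if m is divisible by at most n − 3 of the p_j. -/

import Mathlib

open scoped BigOperators

open Complex Filter Topology

private lemma aux_sinh_int (t : ℤ) : Complex.sinh ((t : ℂ) * Real.pi * Complex.I) = 0 := by
  rw [Complex.sinh_mul_I]
  rw [Complex.sin_eq_zero_iff.mpr ⟨t, rfl⟩, zero_mul]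

private lemma aux_cosh_int (t : ℤ) : Complex.cosh ((t : ℂ) * Real.pi * Complex.I) ≠ 0 := by
  rw [Complex.cosh_mul_I]
  intro h
  obtain ⟨k, hk⟩ := Complex.cos_eq_zero_iff.mp h
  have hπ : (Real.pi : ℂ) ≠ 0 := Complex.ofReal_ne_zero.mpr Real.pi_ne_zero
  have h2 : ((2 * t : ℤ) : ℂ) * Real.pi = ((2 * k + 1 : ℤ) : ℂ) * Real.pi := by
    push_cast
    linear_combination 2 * hk
  have h3 : ((2 * t : ℤ) : ℂ) = ((2 * k + 1 : ℤ) : ℂ) := mul_right_cancel₀ hπ h2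
  have h4 : (2 * t : ℤ) = 2 * k + 1 := by exact_mod_cast h3
  omega

/-- Any zero of sinh is of the form `-k * π * I`. -/
private lemma aux_sinh_eq_zero {w : ℂ} (h : Complex.sinh w = 0) :
    ∃ k : ℤ, w = -((k : ℂ) * Real.pi * Complex.I) := by
  have h1 : Complex.sin (w * Complex.I) = 0 := by rw [Complex.sin_mul_I, h, zero_mul]
  obtain ⟨k, hk⟩ := Complex.sin_eq_zero_iff.mp h1
  refine ⟨k, ?_⟩
  have : w * Complex.I * Complex.I = (k : ℂ) * Real.pi * Complex.I := by rw [hk]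
  rw [mul_assoc, Complex.I_mul_I, mul_neg_one] at this
  rw [← this]; ring

/-- Simple zero factorization: if `f` is analytic at `x` with `f x = 0` and `deriv f x ≠ 0`,
then `f z = (z - x) * u z` near `x`, with `u` analytic and nonvanishing at `x`. -/
private lemma aux_simple_zero {f : ℂ → ℂ} {x : ℂ} (hf : AnalyticAt ℂ f x)
    (h0 : f x = 0) (hd : deriv f x ≠ 0) :
    ∃ u : ℂ → ℂ, AnalyticAt ℂ u x ∧ u x ≠ 0 ∧ ∀ᶠ z in 𝓝 x, f z = (z - x) * u z := by
  have hnz : ¬ (∀ᶠ z in 𝓝 x, f z = 0) := by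
    intro h
    apply hd
    have hEq : f =ᶠ[𝓝 x] (fun _ => (0 : ℂ)) := h
    rw [hEq.deriv_eq]
    simp
  obtain ⟨d, u, hu, hux, hev⟩ := hf.exists_eventuallyEq_pow_smul_nonzero_iff.mpr hnz
  have hd1 : d = 1 := by
    by_contra hne
    rcases Nat.lt_or_ge d 1 with h | h
    · -- d = 0 : then f x = u x ≠ 0, contradiction
      have hd0 : d = 0 := by omega
      have := hev.self_of_nhds
      rw [hd0, pow_zero, one_smul, h0] at this
      exact hux this.symm
    · -- d ≥ 2 : then deriv f x = 0, contradiction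
      have h2 : 2 ≤ d := by omega
      apply hd
      have hEq : f =ᶠ[𝓝 x] (fun z => (z - x) ^ d * u z) := by
        filter_upwards [hev] with z hz
        simpa [smul_eq_mul] using hz
      rw [hEq.deriv_eq]
      have hder : HasDerivAt (fun z => (z - x) ^ d * u z)
          (((d : ℂ) * (x - x) ^ (d - 1) * 1) * u x + (x - x) ^ d * deriv u x) x :=
        (((hasDerivAt_id x).sub_const x).pow d).mul hu.differentiableAt.hasDerivAt
      rw [hder.deriv]
      have h1 : (x - x : ℂ) = 0 := sub_self x
      rw [h1, zero_pow (by omega : d - 1 ≠ 0), zero_pow (by omega : d ≠ 0)]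
      ring
  refine ⟨u, hu, hux, ?_⟩
  filter_upwards [hev] with z hz
  simpa [hd1, smul_eq_mul] using hz

/-- Factorization of `z ↦ sinh (z / (2 c))` at `x = 2 π I m`. -/
private lemma aux_factor_sinh (c : ℤ) (hc : c ≠ 0) (m : ℤ) :
    ∃ u : ℂ → ℂ, AnalyticAt ℂ u (2 * Real.pi * Complex.I * m) ∧
      u (2 * Real.pi * Complex.I * m) ≠ 0 ∧
      ∀ᶠ z in 𝓝 (2 * (Real.pi : ℂ) * Complex.I * (m : ℂ)),
        Complex.sinh (z / (2 * (c : ℂ))) =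
          (z - 2 * Real.pi * Complex.I * m) ^ (if c ∣ m then 1 else 0) * u z := by
  set x : ℂ := 2 * Real.pi * Complex.I * m with hxdef
  have hcc : (c : ℂ) ≠ 0 := Int.cast_ne_zero.mpr hc
  have h2c : (2 * (c : ℂ)) ≠ 0 := by
    simp [hcc]
  have hdiff : Differentiable ℂ (fun z : ℂ => Complex.sinh (z / (2 * (c : ℂ)))) :=
    Complex.differentiable_sinh.comp (differentiable_id.div_const _)
  have han : AnalyticAt ℂ (fun z : ℂ => Complex.sinh (z / (2 * (c : ℂ)))) x :=
    hdiff.analyticAt x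
  by_cases hdvd : c ∣ m
  · obtain ⟨t, ht⟩ := hdvd
    have hxc : x / (2 * (c : ℂ)) = (t : ℂ) * Real.pi * Complex.I := by
      rw [hxdef, ht]
      push_cast
      field_simp
    have h0 : Complex.sinh (x / (2 * (c : ℂ))) = 0 := by
      rw [hxc]; exact aux_sinh_int t
    have hderiv : HasDerivAt (fun z : ℂ => Complex.sinh (z / (2 * (c : ℂ))))
        (Complex.cosh (x / (2 * (c : ℂ))) * (1 / (2 * (c : ℂ)))) x := by
      have h1 : HasDerivAt (fun z : ℂ => z / (2 * (c : ℂ))) (1 / (2 * (c : ℂ))) x := by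
        simpa using (hasDerivAt_id x).div_const (2 * (c : ℂ))
      exact h1.csinh
    have hdne : deriv (fun z : ℂ => Complex.sinh (z / (2 * (c : ℂ)))) x ≠ 0 := by
      rw [hderiv.deriv]
      apply mul_ne_zero
      · rw [hxc]; exact aux_cosh_int t
      · simpa using h2c
    obtain ⟨u, hu, hux, hev⟩ := aux_simple_zero han h0 hdne
    refine ⟨u, hu, hux, ?_⟩
    filter_upwards [hev] with z hz
    rw [if_pos ⟨t, ht⟩, pow_one]
    exact hz
  · refine ⟨fun z => Complex.sinh (z / (2 * (c : ℂ))), han, ?_, ?_⟩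
    · intro h
      obtain ⟨k, hk⟩ := aux_sinh_eq_zero h
      apply hdvd
      -- x / (2c) = -(k π I)  ⇒  m = -k c
      have hπI : (Real.pi : ℂ) * Complex.I ≠ 0 :=
        mul_ne_zero (Complex.ofReal_ne_zero.mpr Real.pi_ne_zero) Complex.I_ne_zero
      have h1 : (m : ℂ) * (Real.pi * Complex.I) = (-k * c : ℂ) * (Real.pi * Complex.I) := by
        have h2 : x = -((k : ℂ) * Real.pi * Complex.I) * (2 * (c : ℂ)) := by
          field_simp at hk
          linear_combination hk
        rw [hxdef] at h2
        linear_combination h2 / 2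
      have h3 : (m : ℂ) = ((-k * c : ℤ) : ℂ) := by
        have := mul_right_cancel₀ hπI h1
        push_cast
        exact this
      have h4 : m = -k * c := by exact_mod_cast h3
      exact ⟨-k, by linarith [h4]⟩
    · filter_upwards with z
      rw [if_neg hdvd, pow_zero, one_mul]

theorem statement14 (n : ℕ) (hn : 3 ≤ n) (p : Fin n → ℤ)
    (hp2 : ∀ j, 2 ≤ p j)
    (hpcop : ∀ i j : Fin n, i ≠ j → IsCoprime (p i) (p j))
    (m : ℤ) :
    ((∃ (g : ℂ → ℂ) (U : Set ℂ), IsOpen U ∧ 2 * (Real.pi : ℂ) * Complex.I * (m : ℂ) ∈ U ∧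
        DifferentiableOn ℂ g U ∧
        ∀ y ∈ U, y ≠ 2 * (Real.pi : ℂ) * Complex.I * (m : ℂ) →
          g y = (∏ j, Complex.sinh (y / (2 * (p j : ℂ)))) / Complex.sinh (y / 2) ^ (n - 2)) ↔
      n - 2 ≤ Set.ncard {j : Fin n | p j ∣ m}) ∧
    (¬ (∃ (g : ℂ → ℂ) (U : Set ℂ), IsOpen U ∧ 2 * (Real.pi : ℂ) * Complex.I * (m : ℂ) ∈ U ∧
        DifferentiableOn ℂ g U ∧
        ∀ y ∈ U, y ≠ 2 * (Real.pi : ℂ) * Complex.I * (m : ℂ) →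
          g y = (∏ j, Complex.sinh (y / (2 * (p j : ℂ)))) / Complex.sinh (y / 2) ^ (n - 2)) ↔
      Set.ncard {j : Fin n | p j ∣ m} ≤ n - 3) := by
  classical
  set x : ℂ := 2 * (Real.pi : ℂ) * Complex.I * (m : ℂ) with hxdef
  set k : ℕ := (Finset.univ.filter fun j : Fin n => p j ∣ m).card with hkdef
  have hncard : Set.ncard {j : Fin n | p j ∣ m} = k := by
    rw [Set.ncard_eq_toFinset_card', Set.toFinset_setOf]
  -- per-factor factorizations
  have hfac : ∀ j : Fin n, ∃ u : ℂ → ℂ, AnalyticAt ℂ u x ∧ u x ≠ 0 ∧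
      ∀ᶠ z in 𝓝 x, Complex.sinh (z / (2 * (p j : ℂ))) =
        (z - x) ^ (if p j ∣ m then 1 else 0) * u z := fun j =>
    aux_factor_sinh (p j) (by have := hp2 j; omega) m
  choose u hu hux huev using hfac
  obtain ⟨v, hv, hvx, hvev0⟩ := aux_factor_sinh 1 one_ne_zero m
  have hvev : ∀ᶠ z in 𝓝 x, Complex.sinh (z / 2) = (z - x) * v z := by
    filter_upwards [hvev0] with z hz
    simpa [one_dvd] using hz
  set G : ℂ → ℂ := fun z => (∏ j, u j z) / (v z) ^ (n - 2) with hGdef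
  have hG : AnalyticAt ℂ G x :=
    (Finset.analyticAt_fun_prod _ (fun j _ => hu j)).div (hv.pow _) (pow_ne_zero _ hvx)
  have hGx : G x ≠ 0 :=
    div_ne_zero (Finset.prod_ne_zero_iff.mpr fun j _ => hux j) (pow_ne_zero _ hvx)
  set e : ℤ := (k : ℤ) - ((n - 2 : ℕ) : ℤ) with hedef
  have hsum : (∑ j : Fin n, if p j ∣ m then 1 else 0) = k := by
    rw [hkdef, Finset.sum_boole]; simp
  -- the key eventual factorization of F on the punctured neighborhood
  have hFev : ∀ᶠ z in 𝓝[≠] x,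
      (∏ j, Complex.sinh (z / (2 * (p j : ℂ)))) / Complex.sinh (z / 2) ^ (n - 2)
        = (z - x) ^ e * G z := by
    have hall : ∀ᶠ z in 𝓝 x, ∀ j, Complex.sinh (z / (2 * (p j : ℂ))) =
        (z - x) ^ (if p j ∣ m then 1 else 0) * u j z := eventually_all.mpr huev
    filter_upwards [nhdsWithin_le_nhds hall, nhdsWithin_le_nhds hvev,
      self_mem_nhdsWithin] with z h1 h2 h3
    have hzx : z ≠ x := h3
    have hw : z - x ≠ 0 := sub_ne_zero.mpr hzx
    calc (∏ j, Complex.sinh (z / (2 * (p j : ℂ)))) / Complex.sinh (z / 2) ^ (n - 2)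
        = ((z - x) ^ k * ∏ j, u j z) / ((z - x) ^ (n - 2) * (v z) ^ (n - 2)) := by
          rw [h2, mul_pow]
          congr 1
          calc (∏ j, Complex.sinh (z / (2 * (p j : ℂ))))
              = ∏ j, ((z - x) ^ (if p j ∣ m then 1 else 0) * u j z) := by
                exact Finset.prod_congr rfl fun j _ => h1 j
            _ = (∏ j, (z - x) ^ (if p j ∣ m then 1 else 0)) * ∏ j, u j z :=
                Finset.prod_mul_distrib
            _ = (z - x) ^ k * ∏ j, u j z := by
                rw [Finset.prod_pow_eq_pow_sum, hsum]
      _ = ((z - x) ^ k / (z - x) ^ (n - 2)) * ((∏ j, u j z) / (v z) ^ (n - 2)) :=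
          mul_div_mul_comm _ _ _ _
      _ = (z - x) ^ e * G z := by
          rw [hGdef]
          congr 1
          rw [← zpow_natCast (z - x) k, ← zpow_natCast (z - x) (n - 2),
            ← zpow_sub₀ hw, hedef]
  -- main equivalence: extension exists iff 0 ≤ e
  have main : (∃ (g : ℂ → ℂ) (U : Set ℂ), IsOpen U ∧ x ∈ U ∧
      DifferentiableOn ℂ g U ∧
      ∀ y ∈ U, y ≠ x →
        g y = (∏ j, Complex.sinh (y / (2 * (p j : ℂ)))) / Complex.sinh (y / 2) ^ (n - 2)) ↔
      0 ≤ e := by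
    constructor
    · rintro ⟨g, U, hUo, hxU, hgd, hgeq⟩
      by_contra hlt
      push_neg at hlt
      set M : ℕ := (-e).toNat with hMdef
      have hM : M ≠ 0 := by
        rw [hMdef]; omega
      have hgc : ContinuousAt g x := hgd.continuousOn.continuousAt (hUo.mem_nhds hxU)
      have h1 : Tendsto (fun z => (z - x) ^ M * g z) (𝓝[≠] x) (𝓝 0) := by
        have hc : ContinuousAt (fun z => (z - x) ^ M * g z) x :=
          (((continuous_id.sub continuous_const).pow M).continuousAt).mul hgc
        have h0 : (x - x : ℂ) ^ M * g x = 0 := by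
          rw [sub_self, zero_pow hM, zero_mul]
        exact h0 ▸ hc.tendsto.mono_left nhdsWithin_le_nhds
      have h2 : Tendsto G (𝓝[≠] x) (𝓝 (G x)) :=
        hG.continuousAt.tendsto.mono_left nhdsWithin_le_nhds
      have hEq : (fun z => (z - x) ^ M * g z) =ᶠ[𝓝[≠] x] G := by
        have hUev : ∀ᶠ z in 𝓝[≠] x, z ∈ U := nhdsWithin_le_nhds (hUo.mem_nhds hxU)
        filter_upwards [hFev, hUev, self_mem_nhdsWithin] with z hz hzU h3
        have hzx : z ≠ x := h3
        have hw : z - x ≠ 0 := sub_ne_zero.mpr hzx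
        have hpow : (z - x) ^ M * (z - x) ^ e = 1 := by
          rw [← zpow_natCast (z - x) M, ← zpow_add₀ hw]
          have hMe : (M : ℤ) + e = 0 := by
            rw [hMdef, Int.toNat_of_nonneg (by omega : (0:ℤ) ≤ -e)]; ring
          rw [hMe, zpow_zero]
        rw [hgeq z hzU hzx, hz, ← mul_assoc, hpow, one_mul]
      have huniq : (0 : ℂ) = G x := tendsto_nhds_unique (h1.congr' hEq) h2
      exact hGx huniq.symm
    · intro he0
      set N : ℕ := e.toNat with hNdef
      have heN : (N : ℤ) = e := Int.toNat_of_nonneg he0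
      have hGan : ∀ᶠ z in 𝓝 x, AnalyticAt ℂ G z := hG.eventually_analyticAt
      have hFev' : ∀ᶠ z in 𝓝 x, z ≠ x →
          (∏ j, Complex.sinh (z / (2 * (p j : ℂ)))) / Complex.sinh (z / 2) ^ (n - 2)
            = (z - x) ^ e * G z := eventually_nhdsWithin_iff.mp hFev
      obtain ⟨U, hUsub, hUo, hxU⟩ := eventually_nhds_iff.mp (hGan.and hFev')
      refine ⟨fun z => (z - x) ^ N * G z, U, hUo, hxU, ?_, ?_⟩
      · intro z hz
        exact (((differentiable_id.sub_const x).differentiableAt.pow N).mul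
          (hUsub z hz).1.differentiableAt).differentiableWithinAt
      · intro y hy hyx
        rw [(hUsub y hy).2 hyx, ← heN, zpow_natCast]
  rw [hncard]
  have hiff : (0 ≤ e) ↔ (n - 2 ≤ k) := by
    rw [hedef]; omega
  constructor
  · exact main.trans hiff
  · rw [not_congr (main.trans hiff)]
    omega
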